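/- Every join-distributive lattice of length n and join-width at most k (with n ≥ 1, k ≥ 2) is isomorphic to the π-coordinatized lattice C(π) for some (k−1)-tuple π = (π_{12},…,π_{1k}) of permutations of {1,…,n}. -/

import Mathlib

/-- The initial segment `{σ(1), …, σ(j)}` of a permutation `σ` of `{1,…,n}`
(encoded on `Fin n`), as a finset; for `j = 0` this is `∅`. -/
def iniSeg {n : ℕ} (σ : Equiv.Perm (Fin n)) (j : ℕ) : Finset (Fin n) :=
  (Finset.univ.filter fun m : Fin n => (m : ℕ) < j).image σ

/-- The Edelman–Jamison lattice `E(σ)`: the join-subsemilattice of the powerset of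
`{1,…,n}` (ordered by inclusion, with join `∪`) generated by the initial segments
`{σ_i(1),…,σ_i(j)}`, `1 ≤ i ≤ k`, `0 ≤ j ≤ n`. -/
def EJ {n k : ℕ} (σ : Fin k → Equiv.Perm (Fin n)) : Set (Finset (Fin n)) :=
  supClosure {S | ∃ (i : Fin k) (j : ℕ), j ≤ n ∧ S = iniSeg (σ i) j}

/-- `π`-eligibility of a `k`-tuple `x ∈ {0,…,n}^k`: `π_{ij}(x_i + 1) ≥ x_j + 1` holds
whenever `x_i < n`, where `π_{ij} = π_{1j} ∘ π_{1i}⁻¹` (a value `v ∈ {1,…,n}` is encoded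
as the element `v - 1` of `Fin n`). -/
def Eligible {n k : ℕ} (π : Fin k → Equiv.Perm (Fin n)) (x : Fin k → ℕ) : Prop :=
  (∀ i, x i ≤ n) ∧
    ∀ (i j : Fin k) (h : x i < n), x j + 1 ≤ ((π j) ((π i)⁻¹ ⟨x i, h⟩) : ℕ) + 1

/-- A lattice is join-distributive if for every non-maximal `x`, the interval `[x, x*]`
is distributive, where `x*` is the join (least upper bound) of the upper covers of `x`. -/
def JoinDistributive (α : Type*) [Lattice α] : Prop :=
  ∀ x u : α, ¬IsMax x → IsLUB {y | x ⋖ y} u →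
    ∀ a ∈ Set.Icc x u, ∀ b ∈ Set.Icc x u, ∀ c ∈ Set.Icc x u,
      a ⊓ (b ⊔ c) = (a ⊓ b) ⊔ (a ⊓ c)

namespace S7

variable {L : Type*} [Lattice L] [Fintype L]

lemma exists_le_covBy' {a b : L} (h : a < b) : ∃ x, a ≤ x ∧ x ⋖ b := by
  obtain ⟨x, hx, hmax⟩ := Set.Finite.exists_maximalFor id {y | a ≤ y ∧ y < b}
    (Set.toFinite _) ⟨a, le_rfl, h⟩
  refine ⟨x, hx.1, hx.2, fun c hxc hcb => ?_⟩
  exact absurd (le_antisymm hxc.le (hmax ⟨hx.1.trans hxc.le, hcb⟩ hxc.le)) hxc.ne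

lemma exists_covBy_le' {a b : L} (h : a < b) : ∃ x, a ⋖ x ∧ x ≤ b := by
  obtain ⟨x, hx, hmin⟩ := Set.Finite.exists_minimalFor id {y | a < y ∧ y ≤ b}
    (Set.toFinite _) ⟨b, h, le_rfl⟩
  refine ⟨x, ⟨hx.1, fun c hac hcx => ?_⟩, hx.2⟩
  exact absurd (le_antisymm hcx.le (hmin ⟨hac, hcx.le.trans hx.2⟩ hcx.le)) hcx.ne

variable [BoundedOrder L]

/-- Apply the join-distributivity hypothesis inside the interval above `x`. -/
lemma jd_apply (hJD : JoinDistributive L) {x z : L} (hx : x < z)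
    {a b c : L} (ha1 : x ≤ a) (hb1 : x ≤ b) (hc1 : x ≤ c)
    (ha2 : ∀ y, (∀ w, x ⋖ w → w ≤ y) → a ≤ y)
    (hb2 : x ⋖ b) (hc2 : x ⋖ c) :
    a ⊓ (b ⊔ c) = (a ⊓ b) ⊔ (a ⊓ c) := by
  letI := Fintype.toCompleteLattice L
  have hlub : IsLUB {y | x ⋖ y} (sSup {y | x ⋖ y}) := isLUB_sSup _
  have hmax : ¬ IsMax x := fun h => hx.not_ge (h hx.le)
  have hub : ∀ w, x ⋖ w → w ≤ sSup {y | x ⋖ y} := fun w hw => le_sSup hw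
  exact hJD x _ hmax hlub a ⟨ha1, ha2 _ hub⟩ b ⟨hb1, hub _ hb2⟩ c ⟨hc1, hub _ hc2⟩

/-- Join-distributive implies (upper) semimodular. -/
lemma semimodular (hJD : JoinDistributive L) : ∀ z b : L, z ⊓ b ⋖ b → z ⋖ z ⊔ b := by
  intro z
  induction z using WellFoundedLT.induction with
  | ind z ih =>
  intro b hcov
  have hbz : ¬ b ≤ z := by
    intro hb
    rw [inf_eq_right.2 hb] at hcov
    exact hcov.ne rfl
  rcases eq_or_lt_of_le (inf_le_left : z ⊓ b ≤ z) with he | hlt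
  · rw [sup_eq_right.2 (le_of_eq_of_le he.symm inf_le_right)]
    exact he ▸ hcov
  obtain ⟨z', hz'le, hz'z⟩ := exists_le_covBy' hlt
  have hz'b : z' ⊓ b = z ⊓ b :=
    le_antisymm (inf_le_inf_right b hz'z.le) (le_inf hz'le inf_le_right)
  have hw : z' ⋖ z' ⊔ b := ih z' hz'z.lt b (hz'b ▸ hcov)
  set w := z' ⊔ b with hw_def
  have hzw : ¬ z ≤ w := by
    intro hzleW
    rcases hw.eq_or_eq (hz'z.le) hzleW with h | h
    · exact hz'z.lt.ne' h
    · exact hbz (le_sup_right.trans h.ge)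
  have hsup : z ⊔ w = z ⊔ b := by
    rw [hw_def, ← sup_assoc, sup_eq_left.2 hz'z.le]
  have hne : z ≠ z ⊔ b := fun h => hbz (le_sup_right.trans h.ge)
  refine ⟨lt_of_le_of_ne le_sup_left hne, fun t h1 h2 => ?_⟩
  -- t with z < t < z ⊔ b leads to contradiction via distributivity in [z', z'*]
  have ht : t ⊓ (z ⊔ w) = (t ⊓ z) ⊔ (t ⊓ w) := by
    refine jd_apply hJD hz'z.lt (hz'z.le.trans h1.le) hz'z.le le_sup_left
      (fun y hy => ?_) hz'z hw
    calc t ≤ z ⊔ b := h2.le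
    _ = z ⊔ w := hsup.symm
    _ ≤ y := sup_le (hy z hz'z) (hy w hw)
  rw [hsup] at ht
  have htz : t ⊓ z = z := inf_eq_right.2 h1.le
  have htfull : t ⊓ (z ⊔ b) = t := inf_eq_left.2 h2.le
  rw [htfull, htz] at ht
  rcases hw.eq_or_eq (le_inf (hz'z.le.trans h1.le) le_sup_left) inf_le_right with h | h
  · rw [h, sup_eq_left.2 hz'z.le] at ht
    exact h1.ne' ht
  · rw [h, hsup] at ht
    exact h2.ne ht


/-- In a finite poset, every element of a set lies below some maximal element of the set. -/
lemma exists_maximal_above {P : L → Prop} {z : L} (hz : P z) :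
    ∃ m, P m ∧ z ≤ m ∧ ∀ w, P w → m ≤ w → m = w := by
  obtain ⟨m, hm, hmax⟩ := Set.Finite.exists_maximalFor id {y | P y ∧ z ≤ y}
    (Set.toFinite _) ⟨z, hz, le_rfl⟩
  exact ⟨m, hm.1, hm.2, fun w hw hmw => le_antisymm hmw (hmax ⟨hw, hm.2.trans hmw⟩ hmw)⟩

/-- The key lemma: in a join-distributive finite lattice, for every covering pair `a ⋖ b`
the set `{z | a ≤ z, b ≰ z}` has a largest element. -/
lemma exists_max_label (hJD : JoinDistributive L) :
    ∀ a b : L, a ⋖ b → ∃ m, (a ≤ m ∧ ¬ b ≤ m) ∧ ∀ z, a ≤ z → ¬ b ≤ z → z ≤ m := by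
  intro a
  induction a using WellFoundedGT.induction with
  | ind a ih =>
  intro b hab
  -- it suffices to show any two maximal elements of `M a b` coincide
  have key : ∀ m1 m2 : L,
      ((a ≤ m1 ∧ ¬ b ≤ m1) ∧ ∀ w, (a ≤ w ∧ ¬ b ≤ w) → m1 ≤ w → m1 = w) →
      ((a ≤ m2 ∧ ¬ b ≤ m2) ∧ ∀ w, (a ≤ w ∧ ¬ b ≤ w) → m2 ≤ w → m2 = w) →
      m1 = m2 := by
    intro m1 m2 hm1 hm2
    have hbw1 : ∀ w, m1 < w → b ≤ w := by
      intro w hw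
      by_contra hbw
      exact hw.ne (hm1.2 w ⟨hm1.1.1.trans hw.le, hbw⟩ hw.le)
    have hbw2 : ∀ w, m2 < w → b ≤ w := by
      intro w hw
      by_contra hbw
      exact hw.ne (hm2.2 w ⟨hm2.1.1.trans hw.le, hbw⟩ hw.le)
    rcases eq_or_lt_of_le hm1.1.1 with ha1 | ha1
    · rcases eq_or_lt_of_le hm2.1.1 with ha2 | ha2
      · exact ha1.symm.trans ha2
      · exact absurd (hbw1 m2 (ha1 ▸ ha2)) hm2.1.2
    rcases eq_or_lt_of_le hm2.1.1 with ha2 | ha2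
    · exact absurd (hbw2 m1 (ha2 ▸ ha1)) hm1.1.2
    obtain ⟨d1, hd1, hd1le⟩ := exists_covBy_le' ha1
    obtain ⟨d2, hd2, hd2le⟩ := exists_covBy_le' ha2
    -- `b ⊓ d = a` for any cover `d` of `a` below an `m i`
    have hbd : ∀ d : L, a ⋖ d → d ≤ m1 ∨ d ≤ m2 → b ⊓ d = a := by
      intro d hd hdle
      rcases hab.eq_or_eq (le_inf hab.le hd.le) inf_le_left with h | h
      · exact h
      · exfalso
        have hbled : b ≤ d := h ▸ inf_le_right
        rcases hdle with h' | h'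
        · exact hm1.1.2 (hbled.trans h')
        · exact hm2.1.2 (hbled.trans h')
    have hbd1 : b ⊓ d1 = a := hbd d1 hd1 (Or.inl hd1le)
    have hbd2 : b ⊓ d2 = a := hbd d2 hd2 (Or.inr hd2le)
    set e := d1 ⊔ d2 with he_def
    have hbe : ¬ b ≤ e := by
      by_cases hd : d1 = d2
      · rw [he_def, ← hd, sup_idem]
        intro hble
        exact hab.lt.ne' ((inf_eq_left.2 hble) ▸ hbd1)
      · have : b ⊓ e = (b ⊓ d1) ⊔ (b ⊓ d2) :=
          jd_apply hJD hab.lt hab.le hd1.le hd2.le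
            (fun y hy => hy b hab) hd1 hd2
        rw [hbd1, hbd2, sup_idem] at this
        intro hble
        exact hab.lt.ne' ((inf_eq_left.2 hble) ▸ this)
    have hae : a < e := lt_of_lt_of_le hd1.lt le_sup_left
    -- any cover `d` of `a` with `d ≤ m i` (`m i` maximal) satisfies: everything in
    -- `M d (d ⊔ b)` is below `m i`.  Apply to `e`.
    have sub : ∀ d m : L, a ⋖ d → d ≤ m → b ⊓ d = a →
        ((a ≤ m ∧ ¬ b ≤ m) ∧ ∀ w, (a ≤ w ∧ ¬ b ≤ w) → m ≤ w → m = w) →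
        ∀ z, d ≤ z → ¬ b ≤ z → z ≤ m := by
      intro d m hd hdm hbda hm z hdz hbz
      have hcov : d ⋖ d ⊔ b := by
        have : d ⊓ b ⋖ b := by rw [inf_comm, hbda]; exact hab
        exact semimodular hJD d b this
      obtain ⟨m', hm', hm'max⟩ := ih d hd.lt (d ⊔ b) hcov
      have hmm' : m ≤ m' := hm'max m hdm (fun h => hm.1.2 (le_sup_right.trans h))
      have hm'M : a ≤ m' ∧ ¬ b ≤ m' :=
        ⟨hd.le.trans hm'.1, fun h => hm'.2 (sup_le hm'.1 h)⟩
      have : m = m' := hm.2 m' hm'M hmm'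
      exact this ▸ hm'max z hdz (fun h => hbz (le_sup_right.trans h))
    have he1 : e ≤ m1 := sub d1 m1 hd1 hd1le hbd1 hm1 e le_sup_left hbe
    have he2 : e ≤ m2 := sub d2 m2 hd2 hd2le hbd2 hm2 e le_sup_right hbe
    -- now apply the inductive hypothesis at `e`
    have hcov_e : e ⋖ e ⊔ b := by
      have hbea : b ⊓ e = a := by
        rcases hab.eq_or_eq (le_inf hab.le hae.le) inf_le_left with h | h
        · exact h
        · exact absurd (h ▸ inf_le_right) hbe
      have : e ⊓ b ⋖ b := by rw [inf_comm, hbea]; exact hab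
      exact semimodular hJD e b this
    obtain ⟨m'', hm'', hm''max⟩ := ih e hae (e ⊔ b) hcov_e
    have h1 : m1 = m'' := by
      have hle : m1 ≤ m'' := hm''max m1 he1 (fun h => hm1.1.2 (le_sup_right.trans h))
      exact hm1.2 m'' ⟨hae.le.trans hm''.1, fun h => hm''.2 (sup_le hm''.1 h)⟩ hle
    have h2 : m2 = m'' := by
      have hle : m2 ≤ m'' := hm''max m2 he2 (fun h => hm2.1.2 (le_sup_right.trans h))
      exact hm2.2 m'' ⟨hae.le.trans hm''.1, fun h => hm''.2 (sup_le hm''.1 h)⟩ hle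
    exact h1.trans h2.symm
  obtain ⟨m, hmP, -, hmmax⟩ :=
    exists_maximal_above (P := fun z => a ≤ z ∧ ¬ b ≤ z) ⟨le_rfl, fun h => hab.lt.not_ge h⟩
  refine ⟨m, hmP, fun z hz1 hz2 => ?_⟩
  obtain ⟨mz, hmzP, hzmz, hmzmax⟩ :=
    exists_maximal_above (P := fun z => a ≤ z ∧ ¬ b ≤ z) ⟨hz1, hz2⟩
  have := key mz m ⟨hmzP, hmzmax⟩ ⟨hmP, hmmax⟩
  exact this ▸ hzmz


/-! ### Cover chains -/

/-- A chain of covers from `a` to `b`. -/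
structure CChain (a b : L) where
  p : ℕ
  c : ℕ → L
  h0 : c 0 = a
  hp : c p = b
  hcov : ∀ t < p, c t ⋖ c (t + 1)

namespace CChain

variable {a a' b b' d : L}

omit [Fintype L] [BoundedOrder L]

/-- The trivial chain. -/
def refl (a : L) : CChain a a := ⟨0, fun _ => a, rfl, rfl, by omega⟩

/-- Change the endpoints. -/
def copy (C : CChain a b) (ha : a = a') (hb : b = b') : CChain a' b' :=
  ⟨C.p, C.c, ha ▸ C.h0, hb ▸ C.hp, C.hcov⟩

@[simp] lemma copy_p (C : CChain a b) (ha : a = a') (hb : b = b') :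
    (C.copy ha hb).p = C.p := rfl

@[simp] lemma copy_c (C : CChain a b) (ha : a = a') (hb : b = b') :
    (C.copy ha hb).c = C.c := rfl

lemma ends_eq (C : CChain a b) (h : C.p = 0) : a = b := by
  have h' := C.hp
  rw [h] at h'
  rw [← C.h0, h']

/-- Concatenation of cover chains. -/
def trans (C : CChain a b) (D : CChain b d) : CChain a d where
  p := C.p + D.p
  c := fun t => if t < C.p then C.c t else D.c (t - C.p)
  h0 := by
    show (if 0 < C.p then C.c 0 else D.c (0 - C.p)) = a
    by_cases h : 0 < C.p
    · rw [if_pos h, C.h0]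
    · rw [if_neg h, Nat.zero_sub, D.h0, ← C.ends_eq (by omega)]
  hp := by
    show (if C.p + D.p < C.p then C.c (C.p + D.p) else D.c (C.p + D.p - C.p)) = d
    rw [if_neg (by omega), Nat.add_sub_cancel_left, D.hp]
  hcov := by
    intro t ht
    show (if t < C.p then C.c t else D.c (t - C.p)) ⋖
      (if t + 1 < C.p then C.c (t + 1) else D.c (t + 1 - C.p))
    rcases lt_trichotomy (t + 1) C.p with h | h | h
    · rw [if_pos (by omega), if_pos h]
      exact C.hcov t (by omega)
    · have hb : C.c (t + 1) = b := by rw [h, C.hp]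
      rw [if_pos (by omega), if_neg (by omega), show t + 1 - C.p = 0 by omega, D.h0]
      have := C.hcov t (by omega)
      rwa [hb] at this
    · rw [if_neg (by omega), if_neg (by omega), show t + 1 - C.p = (t - C.p) + 1 by omega]
      exact D.hcov (t - C.p) (by omega)

@[simp] lemma trans_p (C : CChain a b) (D : CChain b d) : (C.trans D).p = C.p + D.p := rfl

lemma trans_c₂ (C : CChain a b) (D : CChain b d) (r : ℕ) :
    (C.trans D).c (C.p + r) = D.c r := by
  show (if C.p + r < C.p then _ else _) = _
  rw [if_neg (by omega), Nat.add_sub_cancel_left]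

lemma mono (C : CChain a b) : ∀ s t, s ≤ t → t ≤ C.p → C.c s ≤ C.c t := by
  intro s t hst htp
  induction t with
  | zero => simp [Nat.le_zero.1 hst]
  | succ t ih =>
    rcases Nat.lt_or_ge s (t + 1) with h | h
    · exact (ih (by omega) (by omega)).trans (C.hcov t (by omega)).le
    · rw [show s = t + 1 by omega]

lemma strict_mono (C : CChain a b) : ∀ s t, s < t → t ≤ C.p → C.c s < C.c t := by
  intro s t hst htp
  exact lt_of_lt_of_le (C.hcov s (by omega)).lt (C.mono (s + 1) t (by omega) htp)

lemma pos_of_ne (C : CChain a b) (h : a ≠ b) : 0 < C.p := by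
  rcases Nat.eq_zero_or_pos C.p with h0 | h0
  · exact absurd (C.ends_eq h0) h
  · exact h0

/-- The first step of a nonempty cover chain. -/
lemma covBy_one (C : CChain a b) (h : 0 < C.p) : a ⋖ C.c 1 := by
  have := C.hcov 0 h
  rwa [C.h0] at this

/-- Dropping the first step. -/
def tail (C : CChain a b) (h : 0 < C.p) : CChain (C.c 1) b where
  p := C.p - 1
  c := fun t => C.c (t + 1)
  h0 := rfl
  hp := by
    show C.c (C.p - 1 + 1) = b
    rw [show C.p - 1 + 1 = C.p by omega, C.hp]
  hcov := fun t ht => C.hcov (t + 1) (by omega)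

@[simp] lemma tail_p (C : CChain a b) (h : 0 < C.p) : (C.tail h).p = C.p - 1 := rfl

/-- A single cover as a chain. -/
def single {a x : L} (hax : a ⋖ x) : CChain a x :=
  ⟨1, fun t => if t = 0 then a else x, by simp, by simp, by
    intro t ht
    have ht0 : t = 0 := by omega
    simpa [ht0] using hax⟩

/-- `cons` of a cover and a chain. -/
def cons {a x b : L} (hax : a ⋖ x) (C : CChain x b) : CChain a b :=
  (single hax).trans C

@[simp] lemma cons_p {a x b : L} (hax : a ⋖ x) (C : CChain x b) :
    (cons hax C).p = C.p + 1 := Nat.add_comm 1 C.p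

lemma cons_c {a x b : L} (hax : a ⋖ x) (C : CChain x b) (r : ℕ) :
    (cons hax C).c (1 + r) = C.c r := trans_c₂ _ _ r

end CChain

/-- Existence of cover chains. -/
lemma exists_cchain : ∀ a b : L, a ≤ b → Nonempty (CChain a b) := by
  intro a
  induction a using WellFoundedGT.induction with
  | ind a ih =>
  intro b hab
  rcases eq_or_lt_of_le hab with rfl | hlt
  · exact ⟨CChain.refl a⟩
  obtain ⟨x, hax, hxb⟩ := exists_covBy_le' hlt
  obtain ⟨C⟩ := ih x hax.lt b hxb
  exact ⟨CChain.cons hax C⟩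

/-- Jordan–Hölder: all maximal chains with the same endpoints have the same length. -/
lemma jh (hJD : JoinDistributive L) :
    ∀ p : ℕ, ∀ (a : L) (C D : CChain a (⊤ : L)), C.p = p → D.p = C.p := by
  intro p
  induction p with
  | zero =>
    intro a C D hC
    rcases Nat.eq_zero_or_pos D.p with h | h
    · rw [h, hC]
    · exact absurd (lt_of_le_of_lt (C.ends_eq hC).ge (D.covBy_one h).lt) not_top_lt
  | succ p ihp =>
    intro a C D hC
    rcases Nat.eq_zero_or_pos D.p with h | h
    · exact absurd (lt_of_le_of_lt (D.ends_eq h).ge (C.covBy_one (by omega)).lt) not_top_lt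
    have hCpos : 0 < C.p := by omega
    set x := C.c 1 with hx
    set y := D.c 1 with hy
    have hax : a ⋖ x := C.covBy_one hCpos
    have hay : a ⋖ y := D.covBy_one h
    have hCt : (C.tail hCpos).p = p := by simp [CChain.tail_p, hC]
    by_cases hxy : x = y
    · have := ihp x (C.tail hCpos) ((D.tail h).copy hxy.symm rfl) hCt
      rw [CChain.copy_p, CChain.tail_p, hCt] at this
      rw [CChain.tail_p] at hCt
      omega
    · have hixy : x ⊓ y = a := by
        rcases hay.eq_or_eq (le_inf hax.le hay.le) inf_le_right with h' | h'
        · exact h'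
        · have hyx : y ≤ x := by rw [← h']; exact inf_le_left
          rcases eq_or_lt_of_le hyx with h'' | h''
          · exact absurd h''.symm hxy
          · exact absurd h'' (hax.2 hay.lt)
      have hxz : x ⋖ x ⊔ y := semimodular hJD x y (by rw [hixy]; exact hay)
      have hyz : y ⋖ y ⊔ x := semimodular hJD y x (by rw [inf_comm, hixy]; exact hax)
      obtain ⟨E⟩ := exists_cchain (x ⊔ y) ⊤ le_top
      have e1 : E.p + 1 = p := by
        have := ihp x (C.tail hCpos) (CChain.cons hxz E) hCt
        rw [CChain.cons_p, hCt] at this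
        omega
      have e2 : D.p - 1 = p := by
        have hEy : (CChain.cons hyz (E.copy (sup_comm x y) rfl)).p = p := by
          rw [CChain.cons_p, CChain.copy_p, e1]
        have := ihp y (CChain.cons hyz (E.copy (sup_comm x y) rfl)) (D.tail h) hEy
        rw [hEy, CChain.tail_p] at this
        omega
      omega


omit [Fintype L] [BoundedOrder L] in
lemma CChain.trans_c₁ {a b d : L} (C : CChain a b) (D : CChain b d) {r : ℕ} (hr : r ≤ C.p) :
    (C.trans D).c r = C.c r := by
  show (if r < C.p then _ else _) = _
  rcases eq_or_lt_of_le hr with rfl | hlt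
  · rw [if_neg (by omega), Nat.sub_self, D.h0, C.hp]
  · rw [if_pos hlt]

/-- An increasing sequence of points can be refined into a cover chain. -/
lemma exists_cchain_through (m : ℕ) (s : ℕ → L) (hs : ∀ t < m, s t < s (t + 1)) :
    ∃ C : CChain (s 0) (s m), m ≤ C.p ∧ ∀ t ≤ m, ∃ r ≤ C.p, C.c r = s t := by
  induction m with
  | zero =>
    exact ⟨CChain.refl (s 0), le_rfl, fun t ht => ⟨0, le_rfl, by rw [Nat.le_zero.1 ht]; rfl⟩⟩
  | succ m ih =>
    obtain ⟨C1, hC1p, hC1pts⟩ := ih (fun t ht => hs t (by omega))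
    obtain ⟨D⟩ := exists_cchain (s m) (s (m + 1)) (hs m (by omega)).le
    have hDpos : 0 < D.p := D.pos_of_ne (hs m (by omega)).ne
    refine ⟨C1.trans D, by rw [CChain.trans_p]; omega, fun t ht => ?_⟩
    rcases Nat.lt_or_ge t (m + 1) with h | h
    · obtain ⟨r, hr, hrc⟩ := hC1pts t (by omega)
      exact ⟨r, by rw [CChain.trans_p]; omega, by rw [C1.trans_c₁ D hr, hrc]⟩
    · refine ⟨C1.p + D.p, le_rfl, ?_⟩
      rw [CChain.trans_c₂, D.hp, show t = m + 1 by omega]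

section Dim

variable {n : ℕ}

lemma cchain_le_dim (hlen : Order.krullDim L = n) {a b : L} (C : CChain a b) : C.p ≤ n := by
  let s : LTSeries L := ⟨C.p, fun i => C.c i, by
    intro i
    exact (C.hcov i (by omega)).lt⟩
  have := Order.LTSeries.length_le_krullDim s
  rw [hlen] at this
  exact_mod_cast this

lemma exists_long_cchain (hn : 1 ≤ n) (hlen : Order.krullDim L = n) :
    ∃ C : CChain (⊥ : L) ⊤, n ≤ C.p := by
  have hne : Nonempty L := ⟨⊥⟩
  have hex : ∃ s : LTSeries L, n ≤ s.length := by
    by_contra hcon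
    push_neg at hcon
    have hbound : Order.krullDim L ≤ ((n - 1 : ℕ) : WithBot ℕ∞) := by
      refine iSup_le fun p => ?_
      have := hcon p
      exact_mod_cast Nat.cast_le.2 (by omega : p.length ≤ n - 1)
    rw [hlen] at hbound
    have : n ≤ n - 1 := by exact_mod_cast hbound
    omega
  obtain ⟨s, hs⟩ := hex
  set f : ℕ → L := fun t => s ⟨min t s.length, by omega⟩ with hf
  have hmono : ∀ t < s.length, f t < f (t + 1) := by
    intro t ht
    apply s.strictMono
    show (⟨min t s.length, _⟩ : Fin (s.length + 1)) < ⟨min (t+1) s.length, _⟩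
    simp only [Fin.mk_lt_mk]
    omega
  obtain ⟨C, hCp, -⟩ := exists_cchain_through s.length f hmono
  obtain ⟨B⟩ := exists_cchain (⊥ : L) (f 0) bot_le
  obtain ⟨A⟩ := exists_cchain (f s.length) ⊤ le_top
  refine ⟨B.trans (C.trans A), ?_⟩
  rw [CChain.trans_p, CChain.trans_p]
  omega

/-- Every maximal chain of `L` has length exactly `n`. -/
lemma cchain_p_eq (hJD : JoinDistributive L) (hn : 1 ≤ n) (hlen : Order.krullDim L = n)
    (C : CChain (⊥ : L) ⊤) : C.p = n := by
  obtain ⟨B, hB⟩ := exists_long_cchain hn hlen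
  have hBn : B.p = n := le_antisymm (cchain_le_dim hlen B) hB
  have := jh hJD B.p ⊥ B C rfl
  omega

end Dim


section Dilworth

variable {β : Type*} [PartialOrder β] [DecidableEq β]

lemma finset_exists_maximal' {s : Finset β} (hs : s.Nonempty) :
    ∃ m ∈ s, ∀ b ∈ s, m ≤ b → m = b := by
  obtain ⟨m, hm, hmax⟩ := Set.Finite.exists_maximalFor id (↑s : Set β) (Set.toFinite _)
    (Finset.coe_nonempty.2 hs)
  exact ⟨m, hm, fun b hb hmb => le_antisymm hmb (hmax hb hmb)⟩

/-- Dilworth's theorem, by induction on the size of the ground (fin)set, following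
Galvin's proof. -/
lemma dilworth_aux : ∀ (N : ℕ) (S : Finset β), S.card ≤ N →
    ∃ (C : Finset (Finset β)) (A : Finset β),
      ((↑C : Set (Finset β)).PairwiseDisjoint id) ∧
      (∀ t ∈ C, t.Nonempty ∧ t ⊆ S ∧ IsChain (· ≤ ·) (↑t : Set β)) ∧
      (∀ x ∈ S, ∃ t ∈ C, x ∈ t) ∧
      A ⊆ S ∧ IsAntichain (· ≤ ·) (↑A : Set β) ∧ C.card ≤ A.card := by
  classical
  intro N
  induction N with
  | zero =>
    intro S hS
    rw [Nat.le_zero, Finset.card_eq_zero] at hS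
    subst hS
    exact ⟨∅, ∅, by simp, by simp, by simp, by simp, by simp [IsAntichain], by simp⟩
  | succ N ih =>
    intro S hS
    rcases S.eq_empty_or_nonempty with rfl | hSne
    · exact ⟨∅, ∅, by simp, by simp, by simp, by simp, by simp [IsAntichain], by simp⟩
    obtain ⟨a, haS, hamax'⟩ := finset_exists_maximal' hSne
    have hamax : ∀ b ∈ S, a ≤ b → a = b := hamax'
    set S' := S.erase a with hS'def
    have haS' : a ∉ S' := Finset.notMem_erase a S
    have hS'sub : S' ⊆ S := Finset.erase_subset a S
    have hS'card : S'.card ≤ N := by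
      rw [hS'def, Finset.card_erase_of_mem haS]
      omega
    obtain ⟨C', A', hdisj, hchains, hcover, hA'sub, hA'anti, hcard⟩ := ih S' hS'card
    set c := C'.card with hc
    -- chain-selection function
    have hself : ∀ x, ∃ t, x ∈ S' → t ∈ C' ∧ x ∈ t := by
      intro x
      by_cases hx : x ∈ S'
      · obtain ⟨t, ht, hxt⟩ := hcover x hx
        exact ⟨t, fun _ => ⟨ht, hxt⟩⟩
      · exact ⟨∅, fun h => absurd h hx⟩
    choose f hf using hself
    -- K1: every antichain in `S'` has at most `c` elements
    have K1 : ∀ B : Finset β, B ⊆ S' → IsAntichain (· ≤ ·) (↑B : Set β) → B.card ≤ c := by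
      intro B hBsub hBanti
      by_contra hlt
      obtain ⟨x, hxB, y, hyB, hne, hfeq⟩ :=
        Finset.exists_ne_map_eq_of_card_lt_of_maps_to (by omega)
          (fun x hx => (hf x (hBsub hx)).1)
      have hxt : x ∈ f x := (hf x (hBsub hxB)).2
      have hyt : y ∈ f x := hfeq ▸ (hf y (hBsub hyB)).2
      have hch := (hchains (f x) (hf x (hBsub hxB)).1).2.2
      rcases hch (Finset.mem_coe.2 hxt) (Finset.mem_coe.2 hyt) hne with hle | hle
      · exact hBanti (Finset.mem_coe.2 hxB) (Finset.mem_coe.2 hyB) hne hle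
      · exact hBanti (Finset.mem_coe.2 hyB) (Finset.mem_coe.2 hxB) (Ne.symm hne) hle
    -- K3: every `c`-element antichain in `S'` meets every chain
    have K3 : ∀ B : Finset β, B ⊆ S' → IsAntichain (· ≤ ·) (↑B : Set β) → B.card = c →
        ∀ t ∈ C', ∃ x ∈ B, x ∈ t := by
      intro B hBsub hBanti hBcard t ht
      by_contra hno
      push_neg at hno
      have hmapsto : ∀ x ∈ B, f x ∈ C'.erase t := by
        intro x hx
        refine Finset.mem_erase.2 ⟨?_, (hf x (hBsub hx)).1⟩
        intro heq
        exact hno x hx (heq ▸ (hf x (hBsub hx)).2)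
      have hlt : (C'.erase t).card < B.card := by
        rw [Finset.card_erase_of_mem ht, hBcard]
        have : 0 < c := by rw [hc]; exact Finset.card_pos.2 ⟨t, ht⟩
        omega
      obtain ⟨x, hxB, y, hyB, hne, hfeq⟩ :=
        Finset.exists_ne_map_eq_of_card_lt_of_maps_to hlt hmapsto
      have hxt : x ∈ f x := (hf x (hBsub hxB)).2
      have hyt : y ∈ f x := hfeq ▸ (hf y (hBsub hyB)).2
      have hch := (hchains (f x) (hf x (hBsub hxB)).1).2.2
      rcases hch (Finset.mem_coe.2 hxt) (Finset.mem_coe.2 hyt) hne with hle | hle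
      · exact hBanti (Finset.mem_coe.2 hxB) (Finset.mem_coe.2 hyB) hne hle
      · exact hBanti (Finset.mem_coe.2 hyB) (Finset.mem_coe.2 hxB) (Ne.symm hne) hle
    have hA'card : A'.card = c := le_antisymm (K1 A' hA'sub hA'anti) hcard
    -- tip elements
    set tipset : Finset β → Finset β := fun t => t.filter
      (fun x => ∃ B : Finset β, B ⊆ S' ∧ IsAntichain (· ≤ ·) (↑B : Set β) ∧
        B.card = c ∧ x ∈ B) with htipset
    have htipne : ∀ t ∈ C', ∃ m, m ∈ tipset t ∧ ∀ y ∈ tipset t, y ≤ m := by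
      intro t ht
      have hne : (tipset t).Nonempty := by
        obtain ⟨x, hxA, hxt⟩ := K3 A' hA'sub hA'anti hA'card t ht
        exact ⟨x, Finset.mem_filter.2 ⟨hxt, A', hA'sub, hA'anti, hA'card, hxA⟩⟩
      obtain ⟨m, hm, hmax⟩ := finset_exists_maximal' hne
      refine ⟨m, hm, fun y hy => ?_⟩
      have hyt : y ∈ t := (Finset.mem_filter.1 hy).1
      have hmt : m ∈ t := (Finset.mem_filter.1 hm).1
      rcases eq_or_ne y m with rfl | hne'
      · exact le_rfl
      rcases (hchains t ht).2.2 (Finset.mem_coe.2 hyt) (Finset.mem_coe.2 hmt) hne' with h | h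
      · exact h
      · exact (hmax y hy h).ge
    have htipsel : ∀ t, ∃ m, t ∈ C' → m ∈ tipset t ∧ ∀ y ∈ tipset t, y ≤ m := by
      intro t
      by_cases ht : t ∈ C'
      · obtain ⟨m, hm⟩ := htipne t ht
        exact ⟨m, fun _ => hm⟩
      · exact ⟨a, fun h => absurd h ht⟩
    choose tip htip using htipsel
    have htipmem : ∀ t ∈ C', tip t ∈ t := fun t ht => (Finset.mem_filter.1 (htip t ht).1).1
    have htipS' : ∀ t ∈ C', tip t ∈ S' := fun t ht => (hchains t ht).2.1 (htipmem t ht)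
    have htipinj : ∀ t1 ∈ C', ∀ t2 ∈ C', t1 ≠ t2 → tip t1 ≠ tip t2 := by
      intro t1 ht1 t2 ht2 hne heq
      have h1 : tip t1 ∈ t1 := htipmem t1 ht1
      have h2 : tip t1 ∈ t2 := heq ▸ htipmem t2 ht2
      have := hdisj (Finset.mem_coe.2 ht1) (Finset.mem_coe.2 ht2) hne
      exact (Finset.disjoint_left.1 this) h1 h2
    -- tips are pairwise incomparable
    have key : ∀ t1 ∈ C', ∀ t2 ∈ C', t1 ≠ t2 → ¬ tip t1 ≤ tip t2 := by
      intro t1 ht1 t2 ht2 hne hle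
      obtain ⟨B2, hB2sub, hB2anti, hB2card, htipB2⟩ :=
        (Finset.mem_filter.1 (htip t2 ht2).1).2
      obtain ⟨z, hzB2, hzt1⟩ := K3 B2 hB2sub hB2anti hB2card t1 ht1
      have hz_tip : z ≤ tip t1 := (htip t1 ht1).2 z
        (Finset.mem_filter.2 ⟨hzt1, B2, hB2sub, hB2anti, hB2card, hzB2⟩)
      have hzne : z ≠ tip t2 := by
        intro heq
        have := hdisj (Finset.mem_coe.2 ht1) (Finset.mem_coe.2 ht2) hne
        exact (Finset.disjoint_left.1 this) hzt1 (heq ▸ htipmem t2 ht2)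
      exact hB2anti (Finset.mem_coe.2 hzB2) (Finset.mem_coe.2 htipB2) hzne
        (hz_tip.trans hle)
    by_cases hcomp : ∃ t ∈ C', tip t ≤ a
    · -- some tip is below `a`: shrink via the chain through that tip
      obtain ⟨t0, ht0, htip0⟩ := hcomp
      have hc1 : 1 ≤ c := Finset.card_pos.2 ⟨t0, ht0⟩
      set K : Finset β := insert a (t0.filter (· ≤ tip t0)) with hK
      have haK : a ∈ K := Finset.mem_insert_self a _
      set T := S \ K with hT
      have hTsub : T ⊆ S' := by
        intro x hx
        obtain ⟨hxS, hxK⟩ := Finset.mem_sdiff.1 hx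
        exact Finset.mem_erase.2 ⟨fun h => hxK (h ▸ haK), hxS⟩
      have hTcard : T.card ≤ N :=
        le_trans (Finset.card_le_card hTsub) hS'card
      obtain ⟨C'', A'', hdisj2, hchains2, hcover2, hA2sub, hA2anti, hcard2⟩ := ih T hTcard
      have hA2lt : A''.card ≤ c - 1 := by
        have hle' : A''.card ≤ c := K1 A'' (hA2sub.trans hTsub) hA2anti
        rcases eq_or_lt_of_le hle' with heq | hlt
        · exfalso
          obtain ⟨z, hzA, hzt0⟩ := K3 A'' (hA2sub.trans hTsub) hA2anti heq t0 ht0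
          have hz_tip : z ≤ tip t0 := (htip t0 ht0).2 z
            (Finset.mem_filter.2 ⟨hzt0, A'', hA2sub.trans hTsub, hA2anti, heq, hzA⟩)
          have hzK : z ∈ K := Finset.mem_insert_of_mem (Finset.mem_filter.2 ⟨hzt0, hz_tip⟩)
          exact (Finset.mem_sdiff.1 (hA2sub hzA)).2 hzK
        · omega
      have hKnotC : K ∉ C'' := by
        intro hKC
        have := (hchains2 K hKC).2.1 haK
        exact (Finset.mem_sdiff.1 this).2 haK
      refine ⟨insert K C'', A', ?_, ?_, ?_, hA'sub.trans hS'sub, hA'anti, ?_⟩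
      · -- pairwise disjoint
        rw [Finset.coe_insert]
        refine Set.PairwiseDisjoint.insert hdisj2 ?_
        intro t ht hne
        show Disjoint K t
        rw [Finset.disjoint_left]
        intro x hxK hxt
        exact (Finset.mem_sdiff.1 ((hchains2 t ht).2.1 hxt)).2 hxK
      · intro t ht
        rcases Finset.mem_insert.1 ht with rfl | ht
        · refine ⟨⟨a, haK⟩, ?_, ?_⟩
          · intro x hx
            rcases Finset.mem_insert.1 hx with rfl | hx
            · exact haS
            · exact hS'sub ((hchains t0 ht0).2.1 (Finset.mem_filter.1 hx).1)
          · intro x hx y hy hne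
            rw [Finset.mem_coe, hK] at hx hy
            simp only [Finset.mem_insert] at hx hy
            have hfle : ∀ w, w ∈ t0.filter (· ≤ tip t0) → w ≤ a :=
              fun w hw => (Finset.mem_filter.1 hw).2.trans htip0
            rcases hx with rfl | hx
            · rcases hy with rfl | hy
              · exact absurd rfl hne
              · exact Or.inr (hfle y hy)
            · rcases hy with rfl | hy
              · exact Or.inl (hfle x hx)
              · rcases eq_or_ne x y with rfl | hxy
                · exact absurd rfl hne
                · exact (hchains t0 ht0).2.2 (Finset.mem_coe.2 (Finset.mem_filter.1 hx).1)
                    (Finset.mem_coe.2 (Finset.mem_filter.1 hy).1) hxy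
        · obtain ⟨h1, h2, h3⟩ := hchains2 t ht
          exact ⟨h1, h2.trans (Finset.sdiff_subset), h3⟩
      · intro x hxS
        by_cases hxK : x ∈ K
        · exact ⟨K, Finset.mem_insert_self _ _, hxK⟩
        · obtain ⟨t, ht, hxt⟩ := hcover2 x (Finset.mem_sdiff.2 ⟨hxS, hxK⟩)
          exact ⟨t, Finset.mem_insert_of_mem ht, hxt⟩
      · rw [Finset.card_insert_of_notMem hKnotC, hA'card]
        omega
    · -- no tip is comparable with `a`: add `{a}` as a new chain
      push_neg at hcomp
      have hanotip : ∀ t ∈ C', ¬ a ≤ tip t := by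
        intro t ht hle
        have := hamax (tip t) (hS'sub (htipS' t ht)) hle
        exact haS' (this ▸ htipS' t ht)
      have hsing : {a} ∉ C' := by
        intro h
        exact haS' ((hchains {a} h).2.1 (Finset.mem_singleton_self a))
      refine ⟨insert {a} C', insert a (C'.image tip), ?_, ?_, ?_, ?_, ?_, ?_⟩
      · rw [Finset.coe_insert]
        refine Set.PairwiseDisjoint.insert hdisj ?_
        intro t ht hne
        show Disjoint {a} t
        rw [Finset.disjoint_left]
        intro x hx hxt
        rw [Finset.mem_singleton] at hx
        subst hx
        exact haS' ((hchains t ht).2.1 hxt)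
      · intro t ht
        rcases Finset.mem_insert.1 ht with rfl | ht
        · refine ⟨⟨a, Finset.mem_singleton_self a⟩, ?_, ?_⟩
          · intro x hx
            rw [Finset.mem_singleton] at hx
            exact hx ▸ haS
          · intro x hx y hy hne
            rw [Finset.coe_singleton, Set.mem_singleton_iff] at hx hy
            exact absurd (hx.trans hy.symm) hne
        · obtain ⟨h1, h2, h3⟩ := hchains t ht
          exact ⟨h1, h2.trans hS'sub, h3⟩
      · intro x hxS
        rcases eq_or_ne x a with heq | hne
        · exact ⟨{a}, Finset.mem_insert_self _ _, by rw [heq]; exact Finset.mem_singleton_self a⟩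
        · obtain ⟨t, ht, hxt⟩ := hcover x (Finset.mem_erase.2 ⟨hne, hxS⟩)
          exact ⟨t, Finset.mem_insert_of_mem ht, hxt⟩
      · intro x hx
        rcases Finset.mem_insert.1 hx with rfl | hx
        · exact haS
        · obtain ⟨t, ht, rfl⟩ := Finset.mem_image.1 hx
          exact hS'sub (htipS' t ht)
      · intro x hx y hy hne
        simp only [Finset.coe_insert, Set.mem_insert_iff, Finset.mem_coe,
          Finset.mem_image] at hx hy
        rcases hx with rfl | ⟨t1, ht1, rfl⟩
        · rcases hy with rfl | ⟨t2, ht2, rfl⟩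
          · exact absurd rfl hne
          · exact hanotip t2 ht2
        · rcases hy with rfl | ⟨t2, ht2, rfl⟩
          · exact hcomp t1 ht1
          · have ht12 : t1 ≠ t2 := by
              intro h
              exact hne (h ▸ rfl)
            exact key t1 ht1 t2 ht2 ht12
      · have himg : (C'.image tip).card = c := by
          rw [Finset.card_image_of_injOn]
          intro t1 ht1 t2 ht2 heq
          by_contra hne
          exact htipinj t1 ht1 t2 ht2 hne heq
        have hanotin : a ∉ C'.image tip := by
          intro h
          obtain ⟨t, ht, heq⟩ := Finset.mem_image.1 h
          exact haS' (heq ▸ htipS' t ht)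
        rw [Finset.card_insert_of_notMem hsing, Finset.card_insert_of_notMem hanotin, himg]

end Dilworth


/-- Enumerate a finite chain in increasing order. -/
lemma chain_finset_seq : ∀ (N : ℕ) (t : Finset L), t.card ≤ N → t.Nonempty →
    IsChain (· ≤ ·) (↑t : Set L) →
    ∃ (m : ℕ) (s : ℕ → L), (∀ i < m, s i < s (i + 1)) ∧
      (∀ x ∈ t, ∃ i ≤ m, s i = x) ∧ (∀ i ≤ m, s i ∈ t) := by
  classical
  intro N
  induction N with
  | zero =>
    intro t hcard hne
    rw [Nat.le_zero, Finset.card_eq_zero] at hcard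
    subst hcard
    exact absurd hne (by simp)
  | succ N ih =>
    intro t hcard hne hchain
    obtain ⟨M, hM, hMmax⟩ := finset_exists_maximal' hne
    have hMtop : ∀ y ∈ t, y ≤ M := by
      intro y hy
      rcases eq_or_ne y M with rfl | hne'
      · exact le_rfl
      rcases hchain (Finset.mem_coe.2 hy) (Finset.mem_coe.2 hM) hne' with h | h
      · exact h
      · exact (hMmax y hy h).ge
    set t' := t.erase M with ht'
    rcases t'.eq_empty_or_nonempty with h' | h'
    · refine ⟨0, fun _ => M, by omega, fun x hx => ⟨0, le_rfl, ?_⟩, fun i _ => hM⟩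
      rcases eq_or_ne x M with rfl | hne'
      · rfl
      · exfalso
        have hmem : x ∈ t' := Finset.mem_erase.2 ⟨hne', hx⟩
        rw [h'] at hmem
        exact Finset.notMem_empty x hmem
    · have ht'card : t'.card ≤ N := by
        rw [ht', Finset.card_erase_of_mem hM]
        omega
      have ht'chain : IsChain (· ≤ ·) (↑t' : Set L) :=
        hchain.mono (by rw [ht']; exact_mod_cast Finset.erase_subset M t)
      obtain ⟨m', s', hstrict, hpts, hmem⟩ := ih t' ht'card h' ht'chain
      refine ⟨m' + 1, fun i => if i ≤ m' then s' i else M, ?_, ?_, ?_⟩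
      · intro i hi
        show (if i ≤ m' then s' i else M) < (if i + 1 ≤ m' then s' (i + 1) else M)
        rcases Nat.lt_or_ge i m' with h | h
        · rw [if_pos (by omega), if_pos (by omega)]
          exact hstrict i h
        · have hieq : i = m' := by omega
          subst hieq
          rw [if_pos le_rfl, if_neg (by omega)]
          have h1 : s' i ∈ t' := hmem i le_rfl
          exact lt_of_le_of_ne (hMtop _ (Finset.mem_of_mem_erase h1))
            (Finset.ne_of_mem_erase h1)
      · intro x hx
        rcases eq_or_ne x M with rfl | hne'
        · refine ⟨m' + 1, le_rfl, ?_⟩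
          show (if m' + 1 ≤ m' then s' (m' + 1) else x) = x
          rw [if_neg (by omega)]
        · obtain ⟨i, hi, hieq⟩ := hpts x (Finset.mem_erase.2 ⟨hne', hx⟩)
          refine ⟨i, by omega, ?_⟩
          show (if i ≤ m' then s' i else M) = x
          rw [if_pos hi]
          exact hieq
      · intro i hi
        show (if i ≤ m' then s' i else M) ∈ t
        by_cases h : i ≤ m'
        · rw [if_pos h]
          exact Finset.mem_of_mem_erase (hmem i h)
        · rw [if_neg h]
          exact hM

section Chains

variable {n k : ℕ}

/-- Construction of `k` maximal chains passing through all sup-irreducible elements. -/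
lemma exists_chains (hJD : JoinDistributive L) (hn : 1 ≤ n) (hk : 1 ≤ k)
    (hlen : Order.krullDim L = n)
    (hwidth : ∀ A : Finset L, IsAntichain (· ≤ ·) (A : Set L) →
      (∀ a ∈ A, SupIrred a) → A.card ≤ k) :
    ∃ D : Fin k → CChain (⊥ : L) ⊤, (∀ i, (D i).p = n) ∧
      ∀ p : L, SupIrred p → ∃ (i : Fin k) (r : ℕ), r ≤ n ∧ (D i).c r = p := by
  classical
  set S : Finset L := Finset.univ.filter (fun x => SupIrred x) with hS
  obtain ⟨C, A, hdisj, hchains, hcover, hAsub, hAanti, hcard⟩ := dilworth_aux S.card S le_rfl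
  have hCk : C.card ≤ k := by
    refine le_trans hcard (hwidth A hAanti ?_)
    intro a ha
    have := hAsub ha
    rw [hS, Finset.mem_filter] at this
    exact this.2
  -- for every chain finset, a maximal cover chain through it
  have hthrough : ∀ t ∈ C, ∃ E : CChain (⊥ : L) ⊤, ∀ x ∈ t, ∃ r ≤ E.p, E.c r = x := by
    intro t ht
    obtain ⟨htne, htsub, htchain⟩ := hchains t ht
    obtain ⟨m, s, hstrict, hpts, hmem⟩ := chain_finset_seq t.card t le_rfl htne htchain
    obtain ⟨Cmid, hCmidp, hCmidpts⟩ := exists_cchain_through m s hstrict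
    obtain ⟨B⟩ := exists_cchain (⊥ : L) (s 0) bot_le
    obtain ⟨T⟩ := exists_cchain (s m) ⊤ le_top
    refine ⟨B.trans (Cmid.trans T), ?_⟩
    intro x hx
    obtain ⟨i, hi, hieq⟩ := hpts x hx
    obtain ⟨r, hr, hreq⟩ := hCmidpts i hi
    refine ⟨B.p + r, ?_, ?_⟩
    · rw [CChain.trans_p, CChain.trans_p]
      omega
    · rw [CChain.trans_c₂, CChain.trans_c₁ _ _ hr, hreq, hieq]
  have hex : ∀ t : Finset L, ∃ E : CChain (⊥ : L) ⊤,
      t ∈ C → ∀ x ∈ t, ∃ r ≤ E.p, E.c r = x := by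
    intro t
    by_cases ht : t ∈ C
    · obtain ⟨E, hE⟩ := hthrough t ht
      exact ⟨E, fun _ => hE⟩
    · obtain ⟨E⟩ := exists_cchain (⊥ : L) ⊤ bot_le
      exact ⟨E, fun h => absurd h ht⟩
  choose ch hch using hex
  set lst := C.toList with hlst
  have hlstlen : lst.length = C.card := Finset.length_toList C
  obtain ⟨E0⟩ := exists_cchain (⊥ : L) ⊤ bot_le
  set D : Fin k → CChain (⊥ : L) ⊤ := fun i =>
    if h : (i : ℕ) < lst.length then ch (lst.get ⟨i, h⟩) else E0 with hD
  refine ⟨D, fun i => cchain_p_eq hJD hn hlen (D i), ?_⟩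
  intro p hp
  have hpS : p ∈ S := by
    rw [hS, Finset.mem_filter]
    exact ⟨Finset.mem_univ p, hp⟩
  obtain ⟨t, htC, hpt⟩ := hcover p hpS
  have htl : t ∈ lst := by
    rw [hlst]
    exact Finset.mem_toList.2 htC
  obtain ⟨j, hj⟩ := List.mem_iff_get.1 htl
  have hjk : (j : ℕ) < k := by
    have := j.isLt
    omega
  set i : Fin k := ⟨j, hjk⟩ with hi
  have hDi : D i = ch t := by
    have hilt : (i : ℕ) < lst.length := by
      rw [hi]
      exact j.isLt
    show (if h : (i : ℕ) < lst.length then ch (lst.get ⟨i, h⟩) else E0) = ch t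
    rw [dif_pos hilt]
    have hfin : (⟨(i : ℕ), hilt⟩ : Fin lst.length) = j := by
      apply Fin.ext
      show (i : ℕ) = (j : ℕ)
      rw [hi]
    rw [hfin, hj]
  obtain ⟨r, hr, hreq⟩ := hch t htC p hpt
  refine ⟨i, r, ?_, ?_⟩
  · have := cchain_p_eq hJD hn hlen (D i)
    rw [hDi] at this
    omega
  · rw [hDi, hreq]

end Chains


lemma nat_greatest {P : ℕ → Prop} (n : ℕ) (h0 : P 0) :
    ∃ s, s ≤ n ∧ P s ∧ ∀ r ≤ n, P r → r ≤ s := by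
  classical
  exact ⟨Nat.findGreatest P n, Nat.findGreatest_le n,
    Nat.findGreatest_spec (Nat.zero_le n) h0,
    fun r hr hPr => Nat.le_findGreatest hr hPr⟩

section Main

variable {n k : ℕ}

lemma main_iso (hJD : JoinDistributive L) (hn : 1 ≤ n) (hk : 0 < k)
    (hlen : Order.krullDim L = n)
    (hwidth : ∀ A : Finset L, IsAntichain (· ≤ ·) (A : Set L) →
      (∀ a ∈ A, SupIrred a) → A.card ≤ k) :
    ∃ π : Fin k → Equiv.Perm (Fin n),
      π ⟨0, hk⟩ = 1 ∧ Nonempty (L ≃o {x : Fin k → ℕ // Eligible π x}) := by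
  classical
  obtain ⟨D, hDp, hCOV⟩ := exists_chains hJD hn hk hlen hwidth
  have hc0 : ∀ i, (D i).c 0 = ⊥ := fun i => (D i).h0
  have hcn : ∀ i, (D i).c n = ⊤ := fun i => by rw [← hDp i]; exact (D i).hp
  have hcov : ∀ (i : Fin k) (t : ℕ), t < n → (D i).c t ⋖ (D i).c (t + 1) :=
    fun i t ht => (D i).hcov t (by rw [hDp i]; exact ht)
  have hmono : ∀ (i : Fin k) (s t : ℕ), s ≤ t → t ≤ n → (D i).c s ≤ (D i).c t :=
    fun i s t h1 h2 => (D i).mono s t h1 (by rw [hDp i]; exact h2)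
  -- the labels of the covering steps
  have hlabex : ∀ (i : Fin k) (t : ℕ), ∃ m : L, t < n →
      ((D i).c t ≤ m ∧ ¬ (D i).c (t + 1) ≤ m) ∧
      ∀ z, (D i).c t ≤ z → ¬ (D i).c (t + 1) ≤ z → z ≤ m := by
    intro i t
    by_cases ht : t < n
    · obtain ⟨m, hm1, hm2⟩ := exists_max_label hJD ((D i).c t) ((D i).c (t + 1)) (hcov i t ht)
      exact ⟨m, fun _ => ⟨hm1, hm2⟩⟩
    · exact ⟨⊥, fun h => absurd h ht⟩
  choose lab hlab using hlabex
  have lab_le : ∀ (i : Fin k) t, t < n → (D i).c t ≤ lab i t :=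
    fun i t ht => ((hlab i t ht).1).1
  have lab_nle : ∀ (i : Fin k) t, t < n → ¬ (D i).c (t + 1) ≤ lab i t :=
    fun i t ht => ((hlab i t ht).1).2
  have lab_max : ∀ (i : Fin k) t, t < n →
      ∀ z, (D i).c t ≤ z → ¬ (D i).c (t + 1) ≤ z → z ≤ lab i t :=
    fun i t ht => (hlab i t ht).2
  have lab_le_iff : ∀ (i : Fin k) t, t < n → ∀ r, r ≤ n → ((D i).c r ≤ lab i t ↔ r ≤ t) := by
    intro i t ht r hr
    constructor
    · intro h
      by_contra hgt
      exact lab_nle i t ht (le_trans (hmono i (t + 1) r (by omega) hr) h)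
    · intro h
      exact le_trans (hmono i r t h (by omega)) (lab_le i t ht)
  -- each label of one chain occurs as a label of every other chain
  have lab_cross : ∀ i j : Fin k, ∀ t, t < n → ∃ s, s < n ∧ lab j s = lab i t := by
    intro i j t ht
    set m := lab i t with hm
    obtain ⟨s, hsle, hP, hmaxP⟩ := nat_greatest (P := fun r => (D j).c r ≤ m) n
      (by show (D j).c 0 ≤ m; rw [hc0 j]; exact bot_le)
    have hsn : s < n := by
      rcases eq_or_lt_of_le hsle with heq | h
      · exfalso
        have htop : (⊤ : L) ≤ m := by
          rw [← hcn j]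
          exact heq ▸ hP
        exact lab_nle i t ht (le_trans le_top htop)
      · exact h
    have hnP : ¬ (D j).c (s + 1) ≤ m := by
      intro hcon
      have := hmaxP (s + 1) (by omega) hcon
      omega
    have h1 : m ≤ lab j s := lab_max j s hsn m hP hnP
    have h2 : lab j s ≤ m := by
      by_contra hcon
      have hlt : m < lab j s := lt_of_le_of_ne h1 (fun h => hcon h.ge)
      -- by maximality of `m`, anything strictly above `m` is above `(D i).c (t+1)`
      have habove : ∀ w, m < w → (D i).c (t + 1) ≤ w := by
        intro w hw
        by_contra h4
        exact hw.ne' (le_antisymm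
          (lab_max i t ht w (le_trans (lab_le i t ht) hw.le) h4) hw.le)
      have hinfj : m ⊓ (D j).c (s + 1) = (D j).c s := by
        rcases (hcov j s hsn).eq_or_eq (le_inf hP (hmono j s (s+1) (by omega) (by omega)))
          inf_le_right with h' | h'
        · exact h'
        · exact absurd (h' ▸ inf_le_left) hnP
      have hmj : m ⋖ m ⊔ (D j).c (s + 1) := by
        refine semimodular hJD m _ ?_
        rw [hinfj]
        exact hcov j s hsn
      have hw : (D i).c (t + 1) ≤ m ⊔ (D j).c (s + 1) := by
        refine habove _ ?_
        refine lt_of_le_of_ne le_sup_left ?_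
        intro h4
        exact hnP (le_trans le_sup_right h4.ge)
      have hle2 : m ⊔ (D i).c (t + 1) ≤ m ⊔ (D j).c (s + 1) := sup_le le_sup_left hw
      have heq2 : m ⊔ (D i).c (t + 1) = m ⊔ (D j).c (s + 1) := by
        rcases hmj.eq_or_eq le_sup_left hle2 with h5 | h5
        · exfalso
          exact lab_nle i t ht (le_trans le_sup_right h5.le)
        · exact h5
      have hfin : (D j).c (s + 1) ≤ lab j s := by
        have hcj : (D j).c (s + 1) ≤ m ⊔ (D i).c (t + 1) := heq2 ▸ le_sup_right
        have hci : (D i).c (t + 1) ≤ lab j s := habove _ hlt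
        exact le_trans hcj (sup_le h1 hci)
      exact lab_nle j s hsn hfin
    exact ⟨s, hsn, le_antisymm h2 h1⟩
  have lab_inj : ∀ (i : Fin k) t1 t2, t1 < n → t2 < n → lab i t1 = lab i t2 → t1 = t2 := by
    have hgen : ∀ (i : Fin k) a b, a < b → b < n → lab i a ≠ lab i b := by
      intro i a b hab hbn heqab
      have h : (D i).c (a + 1) ≤ lab i b :=
        le_trans (hmono i (a + 1) b (by omega) (by omega)) (lab_le i b hbn)
      rw [← heqab] at h
      exact lab_nle i a (by omega) h
    intro i t1 t2 h1 h2 heq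
    by_contra hne
    rcases Nat.lt_or_ge t1 t2 with h | h
    · exact hgen i t1 t2 h h2 heq
    · exact hgen i t2 t1 (by omega) h1 heq.symm
  -- the permutations
  set i0 : Fin k := ⟨0, hk⟩ with hi0
  set e : Fin k → Fin n → L := fun i t => lab i t with he
  have einj : ∀ i, Function.Injective (e i) :=
    fun i t1 t2 h => Fin.ext (lab_inj i t1 t2 t1.isLt t2.isLt h)
  have hrangesub : ∀ i j : Fin k, Set.range (e i) ⊆ Set.range (e j) := by
    intro i j x hx
    obtain ⟨t, rfl⟩ := hx
    obtain ⟨s, hsn, hseq⟩ := lab_cross i j t t.isLt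
    exact ⟨⟨s, hsn⟩, hseq⟩
  have hrange : ∀ i : Fin k, Set.range (e i0) = Set.range (e i) :=
    fun i => Set.eq_of_subset_of_subset (hrangesub i0 i) (hrangesub i i0)
  set π : Fin k → Equiv.Perm (Fin n) := fun i =>
    (Equiv.ofInjective _ (einj i0)).trans ((Equiv.setCongr (hrange i)).trans
      (Equiv.ofInjective _ (einj i)).symm) with hπdef
  have hπ : ∀ (i : Fin k) (t : Fin n), e i (π i t) = e i0 t := by
    intro i t
    show e i ((Equiv.ofInjective _ (einj i)).symm
      ((Equiv.setCongr (hrange i)) ((Equiv.ofInjective _ (einj i0)) t))) = e i0 t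
    rw [Equiv.apply_ofInjective_symm (einj i)]
    rfl
  have hπ0 : π i0 = 1 := by
    apply Equiv.ext
    intro t
    exact einj i0 (hπ i0 t)
  -- the bridge between labels along different chains
  have bridge : ∀ (i j : Fin k) (t : Fin n),
      lab j ((π j) ((π i)⁻¹ t) : Fin n) = lab i t := by
    intro i j t
    have h1 : e i (π i ((π i).symm t)) = e i0 ((π i).symm t) := hπ i _
    rw [Equiv.apply_symm_apply] at h1
    have h2 : e j (π j ((π i).symm t)) = e i0 ((π i).symm t) := hπ j _
    have h3 : e j (π j ((π i).symm t)) = e i t := h2.trans h1.symm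
    exact h3
  -- the coordinatization map
  have hΦex : ∀ (x : L) (i : Fin k), ∃ s, s ≤ n ∧ (D i).c s ≤ x ∧
      ∀ r ≤ n, (D i).c r ≤ x → r ≤ s :=
    fun x i => nat_greatest (P := fun s => (D i).c s ≤ x) n
      (by show (D i).c 0 ≤ x; rw [hc0 i]; exact bot_le)
  choose Φ Φle Φspec Φmax' using hΦex
  have Φmax : ∀ x (i : Fin k) (r : ℕ), r ≤ n → (D i).c r ≤ x → r ≤ Φ x i :=
    fun x i r hr h => Φmax' x i r hr h
  have Φnle : ∀ x (i : Fin k), Φ x i < n → ¬ (D i).c (Φ x i + 1) ≤ x := by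
    intro x i h hcon
    have := Φmax x i (Φ x i + 1) (by omega) hcon
    omega
  have hxeq : ∀ x : L, x = Finset.univ.sup (fun i : Fin k => (D i).c (Φ x i)) := by
    intro x
    apply le_antisymm
    · obtain ⟨sI, hsup, hirr⟩ := exists_supIrred_decomposition x
      refine le_trans (le_of_eq hsup.symm) (Finset.sup_le ?_)
      intro b hb
      obtain ⟨i, r, hr, hreq⟩ := hCOV b (hirr hb)
      have hble : b ≤ x := by
        rw [← hsup]
        exact Finset.le_sup (f := id) hb
      have hrle : r ≤ Φ x i := Φmax x i r hr (hreq ▸ hble)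
      calc (id b : L) = (D i).c r := hreq.symm
        _ ≤ (D i).c (Φ x i) := hmono i r (Φ x i) hrle (Φle x i)
        _ ≤ _ := Finset.le_sup (f := fun i : Fin k => (D i).c (Φ x i)) (Finset.mem_univ i)
    · exact Finset.sup_le fun i _ => Φspec x i
  have Elig : ∀ x : L, Eligible π (Φ x) := by
    intro x
    refine ⟨fun i => Φle x i, fun i j h => ?_⟩
    set s : Fin n := (π j) ((π i)⁻¹ ⟨Φ x i, h⟩) with hsdef
    have hbr : lab j (s : ℕ) = lab i (Φ x i) := bridge i j ⟨Φ x i, h⟩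
    have hxm : x ≤ lab i (Φ x i) :=
      lab_max i (Φ x i) h x (Φspec x i) (Φnle x i h)
    have hcj : (D j).c (Φ x j) ≤ lab j (s : ℕ) := by
      rw [hbr]
      exact le_trans (Φspec x j) hxm
    have := (lab_le_iff j (s : ℕ) s.isLt (Φ x j) (Φle x j)).1 hcj
    omega
  have hΦmono : ∀ x y : L, x ≤ y → ∀ i, Φ x i ≤ Φ y i :=
    fun x y h i => Φmax y i (Φ x i) (Φle x i) (le_trans (Φspec x i) h)
  have hΦrefl : ∀ x y : L, (∀ i, Φ x i ≤ Φ y i) → x ≤ y := by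
    intro x y hle
    rw [hxeq x]
    apply Finset.sup_le
    intro i _
    exact le_trans (hmono i (Φ x i) (Φ y i) (hle i) (Φle y i)) (Φspec y i)
  have hsurj : ∀ xv : Fin k → ℕ, Eligible π xv → ∃ y : L, ∀ i, Φ y i = xv i := by
    intro xv hxv
    set y : L := Finset.univ.sup (fun i : Fin k => (D i).c (xv i)) with hy
    refine ⟨y, fun i => ?_⟩
    have hge : xv i ≤ Φ y i :=
      Φmax y i (xv i) (hxv.1 i) (by rw [hy]; exact Finset.le_sup (f := fun j : Fin k => (D j).c (xv j)) (Finset.mem_univ i))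
    rcases eq_or_lt_of_le hge with heq | hlt
    · exact heq.symm
    exfalso
    have h : xv i < n := lt_of_lt_of_le hlt (Φle y i)
    have hym : y ≤ lab i (xv i) := by
      rw [hy]
      apply Finset.sup_le
      intro j _
      have helig := hxv.2 i j h
      set s : Fin n := (π j) ((π i)⁻¹ ⟨xv i, h⟩) with hsdef
      have hbr : lab j (s : ℕ) = lab i (xv i) := bridge i j ⟨xv i, h⟩
      rw [← hbr]
      refine (lab_le_iff j (s : ℕ) s.isLt (xv j) (hxv.1 j)).2 ?_
      omega
    have hc1 : (D i).c (xv i + 1) ≤ y :=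
      le_trans (hmono i (xv i + 1) (Φ y i) (by omega) (Φle y i)) (Φspec y i)
    exact lab_nle i (xv i) h (le_trans hc1 hym)
  -- assemble the order isomorphism
  refine ⟨π, hπ0, ?_⟩
  set f : L → {x : Fin k → ℕ // Eligible π x} := fun x => ⟨Φ x, Elig x⟩ with hf
  have hbij : Function.Bijective f := by
    constructor
    · intro x y hxy
      have h1 : Φ x = Φ y := congrArg Subtype.val hxy
      exact le_antisymm (hΦrefl x y (fun i => (h1 ▸ le_rfl : Φ x i ≤ Φ y i)))
        (hΦrefl y x (fun i => (h1 ▸ le_rfl : Φ y i ≤ Φ x i)))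
    · rintro ⟨xv, hxv⟩
      obtain ⟨y, hy⟩ := hsurj xv hxv
      exact ⟨y, Subtype.ext (funext hy)⟩
  refine ⟨{ toEquiv := Equiv.ofBijective f hbij, map_rel_iff' := ?_ }⟩
  intro x y
  show f x ≤ f y ↔ x ≤ y
  constructor
  · intro h
    exact hΦrefl x y (fun i => h i)
  · intro h
    intro i
    exact hΦmono x y h i

end Main

end S7

/-- Every join-distributive (finite) lattice of length `n` and
join-width at most `k` (with `n ≥ 1`, `k ≥ 2`) is order-isomorphic (equivalently,
isomorphic as a lattice) to the `π`-coordinatized lattice `C(π)` for some `(k-1)`-tuple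
`π = (π_{12},…,π_{1k})` of permutations of `{1,…,n}` (encoded as
`π : Fin k → Equiv.Perm (Fin n)` with `π 0 = id` playing the role of `π_{11}`). -/
theorem statement7 (n k : ℕ) (hn : 1 ≤ n) (hk : 2 ≤ k)
    (L : Type*) [Lattice L] [Fintype L]
    (hJD : JoinDistributive L) (hlen : Order.krullDim L = n)
    (hwidth : ∀ A : Finset L, IsAntichain (· ≤ ·) (A : Set L) →
      (∀ a ∈ A, SupIrred a) → A.card ≤ k) :
    ∃ π : Fin k → Equiv.Perm (Fin n),
      π ⟨0, by omega⟩ = 1 ∧ Nonempty (L ≃o {x : Fin k → ℕ // Eligible π x}) := by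
  have hne : Nonempty L := by
    by_contra h
    rw [not_nonempty_iff] at h
    rw [Order.krullDim_eq_bot_iff.mpr h] at hlen
    exact absurd hlen.symm (by simp)
  letI : BoundedOrder L := Fintype.toBoundedOrder L
  obtain ⟨π, hπ0, hiso⟩ := S7.main_iso hJD hn (by omega : 0 < k) hlen hwidth
  exact ⟨π, hπ0, hiso⟩
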